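/- Define Λ := (1−Nmq)(Nm/(1−τ) + 2α)g − N(mg+F), where q = (1−τ)(L+L_g−αg)/((Nm+α(1−τ))(L+L_g)), L = N[(1−τ)(mL_g+αF)+(mg+F)mN]/(α+(Nm−α)τ), and Π(L_g) = ((L+L_g)q+g)(p−mw) − Fw with p = mw(L+L_g)/(L+L_g−α((L+L_g)q+g)). Assume Nm > α, τ ∈ (0,1), F > 0, w > 0, g > 0, L+L_g−αg > 0. Then the sign of ∂Π/∂L_g equals the sign of L_g − Λ: ∂Π/∂L_g < 0 if L_g < Λ, = 0 if L_g = Λ, and > 0 if L_g > Λ. -/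

import Mathlib

/-- algebraic simplification of the profit function at a point A = L + x with A > αg. -/
lemma aux_pi (α N m F w g τ A : ℝ) (hα : 0 < α) (hN : 0 < N) (hm : 0 < m)
    (hg : 0 < g) (hτ1 : τ < 1) (hA : α * g < A) :
    (A * ((1 - τ) * (A - α * g) / ((N * m + α * (1 - τ)) * A)) + g) *
      (m * w * A /
        (A - α * (A * ((1 - τ) * (A - α * g) / ((N * m + α * (1 - τ)) * A)) + g)) - m * w)
      - F * w
    = α * w / (N * (N * m + α * (1 - τ))) *
        (((1 - τ) * A + g * (N * m)) ^ 2 / (A - α * g)) - F * w := by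
  have hK : 0 < N * m + α * (1 - τ) := by nlinarith
  have hKne' : N * m + (1 - τ) * α ≠ 0 := (by linarith : 0 < N * m + (1 - τ) * α).ne'
  have hA0 : 0 < A := lt_trans (by positivity) hA
  have hA0' : A ≠ 0 := ne_of_gt hA0
  have hq : A * ((1 - τ) * (A - α * g) / ((N * m + α * (1 - τ)) * A)) + g
      = ((1 - τ) * A + g * (N * m)) / (N * m + α * (1 - τ)) := by
    field_simp
    ring
  rw [hq]
  have hv : A - α * (((1 - τ) * A + g * (N * m)) / (N * m + α * (1 - τ)))
      = N * m * (A - α * g) / (N * m + α * (1 - τ)) := by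
    field_simp
    ring
  rw [hv]
  have h0 : (0:ℝ) < A - α * g := by linarith
  have hvne : N * m * (A - α * g) / (N * m + α * (1 - τ)) ≠ 0 :=
    ne_of_gt (div_pos (mul_pos (mul_pos hN hm) h0) hK)
  have h1 : A - α * g ≠ 0 := ne_of_gt h0
  have h1' : A - g * α ≠ 0 := by rw [mul_comm g]; exact h1
  field_simp
  ring

set_option maxHeartbeats 2000000 in
/-- The sign of the response of profit to government employment is determined by the
threshold Λ. -/
theorem stmt_18 (α N m F w g τ : ℝ) (hα : 0 < α) (hN : 0 < N) (hm : 0 < m)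
    (hF : 0 < F) (hw : 0 < w) (hg : 0 < g) (hτ0 : 0 < τ) (hτ1 : τ < 1)
    (hNm : N * m > α) (Lg : ℝ) (hLg : 0 ≤ Lg)
    (hden : 0 < N * ((1 - τ) * (m * Lg + α * F) + (m * g + F) * m * N) / (α + (N * m - α) * τ)
      + Lg - α * g) :
    let L := N * ((1 - τ) * (m * Lg + α * F) + (m * g + F) * m * N) / (α + (N * m - α) * τ)
    let q := (1 - τ) * (L + Lg - α * g) / ((N * m + α * (1 - τ)) * (L + Lg))
    let Λ := (1 - N * m * q) * (N * m / (1 - τ) + 2 * α) * g - N * (m * g + F)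
    let Pi := fun Lg : ℝ =>
      let L := N * ((1 - τ) * (m * Lg + α * F) + (m * g + F) * m * N) / (α + (N * m - α) * τ)
      let q := (1 - τ) * (L + Lg - α * g) / ((N * m + α * (1 - τ)) * (L + Lg))
      let p := m * w * (L + Lg) / (L + Lg - α * ((L + Lg) * q + g))
      ((L + Lg) * q + g) * (p - m * w) - F * w
    (Lg < Λ → deriv Pi Lg < 0) ∧ (Lg = Λ → deriv Pi Lg = 0) ∧ (Lg > Λ → deriv Pi Lg > 0) := by
  intro L q Λ Pi
  have h1τ : (0:ℝ) < 1 - τ := by linarith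
  have hD : (0:ℝ) < α + (N * m - α) * τ := by nlinarith
  have hK : (0:ℝ) < N * m + α * (1 - τ) := by nlinarith
  have hKne' : N * m + (1 - τ) * α ≠ 0 := (by linarith : 0 < N * m + (1 - τ) * α).ne'
  have hDne' : α + τ * (N * m - α) ≠ 0 := (by linarith : 0 < α + τ * (N * m - α)).ne'
  set S : ℝ → ℝ := fun x =>
    N * ((1 - τ) * (m * x + α * F) + (m * g + F) * m * N) / (α + (N * m - α) * τ) + x
    with hSdef
  have hPi : Pi = fun x : ℝ =>
      (S x * ((1 - τ) * (S x - α * g) / ((N * m + α * (1 - τ)) * S x)) + g) *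
        (m * w * S x /
          (S x - α * (S x * ((1 - τ) * (S x - α * g) / ((N * m + α * (1 - τ)) * S x)) + g))
          - m * w) - F * w := rfl
  have hΛ : Λ = (1 - N * m * ((1 - τ) * (S Lg - α * g) / ((N * m + α * (1 - τ)) * S Lg))) *
      (N * m / (1 - τ) + 2 * α) * g - N * (m * g + F) := rfl
  have hsg : α * g < S Lg := by
    simp only [hSdef]
    linarith
  have hs0 : (0:ℝ) < S Lg := lt_trans (by positivity) hsg
  -- continuity and neighborhood
  have hcont : Continuous S := by
    rw [hSdef]; fun_prop
  have hev : ∀ᶠ x in nhds Lg, α * g < S x :=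
    ContinuousAt.eventually_lt continuousAt_const hcont.continuousAt hsg
  have hEq : Pi =ᶠ[nhds Lg] (fun x => α * w / (N * (N * m + α * (1 - τ))) *
      (((1 - τ) * S x + g * (N * m)) ^ 2 / (S x - α * g)) - F * w) := by
    filter_upwards [hev] with x hx
    rw [hPi]
    exact aux_pi α N m F w g τ (S x) hα hN hm hg hτ1 hx
  -- derivative of S
  have hS' : HasDerivAt S (N * ((1 - τ) * m) / (α + (N * m - α) * τ) + 1) Lg := by
    have h1 : HasDerivAt (fun x : ℝ => (1 - τ) * (m * x + α * F) + (m * g + F) * m * N)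
        ((1 - τ) * m) Lg := by
      simpa using ((((hasDerivAt_id Lg).const_mul m).add_const (α * F)).const_mul
        (1 - τ)).add_const ((m * g + F) * m * N)
    exact ((h1.const_mul N).div_const (α + (N * m - α) * τ)).add (hasDerivAt_id Lg)
  have hu : HasDerivAt (fun x => (1 - τ) * S x + g * (N * m))
      ((1 - τ) * (N * ((1 - τ) * m) / (α + (N * m - α) * τ) + 1)) Lg :=
    (hS'.const_mul (1 - τ)).add_const (g * (N * m))
  have hv : HasDerivAt (fun x => S x - α * g)
      (N * ((1 - τ) * m) / (α + (N * m - α) * τ) + 1) Lg := hS'.sub_const (α * g)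
  have hvne : S Lg - α * g ≠ 0 := ne_of_gt (by linarith)
  have hφ := (((hu.pow 2).div hv hvne).const_mul
      (α * w / (N * (N * m + α * (1 - τ))))).sub_const (F * w)
  have hd := hEq.deriv_eq.trans hφ.deriv
  have hvpos : (0:ℝ) < S Lg - α * g := by linarith
  have hD' : α + (N * m - α) * τ ≠ 0 := ne_of_gt hD
  have hfac : deriv Pi Lg = (α * w * ((1 - τ) * S Lg + g * (N * m)) /
      (N * (α + (N * m - α) * τ) * (S Lg - α * g) ^ 2)) *
      ((1 - τ) * S Lg - (2 * α * (1 - τ) + N * m) * g) := by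
    rw [hd]
    simp only [_root_.Pi.pow_apply]
    norm_num
    have hKne : (N * m + α * (1 - τ)) ≠ 0 := ne_of_gt hK
    field_simp
    ring
  have hs0' : N * ((1 - τ) * (m * Lg + α * F) + (m * g + F) * m * N) /
      (α + (N * m - α) * τ) + Lg ≠ 0 := by
    have := hs0; rw [hSdef] at this; exact ne_of_gt this
  have hΛfac : Lg - Λ = (((α + (N * m - α) * τ) * S Lg + α * (N * m) * (1 - τ) * g) /
      ((N * m + α * (1 - τ)) * S Lg * (1 - τ))) *
      ((1 - τ) * S Lg - (2 * α * (1 - τ) + N * m) * g) := by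
    have e : S Lg * (α + (N * m - α) * τ) = N * ((1 - τ) * (Lg * m + α * F) + N * m * (m * g + F)) + Lg * (α + τ * (N * m - α)) := by
      simp only [hSdef]; field_simp
    have e' : N * ((1 - τ) * (Lg * m + α * F) + N * m * (m * g + F)) + Lg * (α + τ * (N * m - α)) ≠ 0 := by
      rw [← e]; exact (mul_pos hs0 hD).ne'
    rw [hΛ]
    rw [hSdef]
    simp only
    field_simp
    ring
  have hupos : (0:ℝ) < (1 - τ) * S Lg + g * (N * m) := by
    have h1 := mul_pos h1τ hs0
    nlinarith
  have hc1 : (0:ℝ) < α * w * ((1 - τ) * S Lg + g * (N * m)) /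
      (N * (α + (N * m - α) * τ) * (S Lg - α * g) ^ 2) :=
    div_pos (mul_pos (mul_pos hα hw) hupos)
      (mul_pos (mul_pos hN hD) (pow_pos hvpos 2))
  have hc2 : (0:ℝ) < ((α + (N * m - α) * τ) * S Lg + α * (N * m) * (1 - τ) * g) /
      ((N * m + α * (1 - τ)) * S Lg * (1 - τ)) := by
    apply div_pos
    · have h1 := mul_pos hD hs0
      have h2 : 0 < α * (N * m) * (1 - τ) * g :=
        mul_pos (mul_pos (mul_pos hα (mul_pos hN hm)) h1τ) hg
      linarith
    · exact mul_pos (mul_pos hK hs0) h1τ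
  set core := (1 - τ) * S Lg - (2 * α * (1 - τ) + N * m) * g with hcoredef
  refine ⟨fun h => ?_, fun h => ?_, fun h => ?_⟩
  · have h0 : ((α + (N * m - α) * τ) * S Lg + α * (N * m) * (1 - τ) * g) /
        ((N * m + α * (1 - τ)) * S Lg * (1 - τ)) * core < 0 := by
      rw [← hΛfac]; linarith
    have hcore : core < 0 := by nlinarith
    rw [hfac]
    exact mul_neg_of_pos_of_neg hc1 hcore
  · have h0 : ((α + (N * m - α) * τ) * S Lg + α * (N * m) * (1 - τ) * g) /
        ((N * m + α * (1 - τ)) * S Lg * (1 - τ)) * core = 0 := by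
      rw [← hΛfac]; linarith
    have hcore : core = 0 := (mul_eq_zero.mp h0).resolve_left (ne_of_gt hc2)
    rw [hfac, hcore, mul_zero]
  · have h0 : 0 < ((α + (N * m - α) * τ) * S Lg + α * (N * m) * (1 - τ) * g) /
        ((N * m + α * (1 - τ)) * S Lg * (1 - τ)) * core := by
      rw [← hΛfac]; linarith
    have hcore : 0 < core := by nlinarith
    rw [hfac]
    exact mul_pos hc1 hcore
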